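/- Let M > 0 and let u : (2M, ∞) → ℝ be twice differentiable and satisfy the radial ODE (r² − 2Mr)·u″(r) + (2r − 2M)·u′(r) = 2·(1 − 4M/r)·u(r) for all r > 2M. Then there exist constants C₁, C₂ ∈ ℝ such that u(r) = C₁/r² + C₂·(12M²·r + 3M·r² + r³ + 24M³·log(r − 2M)) / (3r²) for all r > 2M. -/

import Mathlib

lemma const_of_hasDerivAt_zero_Ioi {a : ℝ} {f : ℝ → ℝ}
    (h : ∀ x ∈ Set.Ioi a, HasDerivAt f 0 x) :
    ∀ x ∈ Set.Ioi a, ∀ y ∈ Set.Ioi a, f x = f y := by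
  intro x hx y hy
  have hconv : Convex ℝ (Set.Ioi a) := convex_Ioi a
  refine hconv.is_const_of_fderivWithin_eq_zero
    (fun z hz => ((h z hz).differentiableAt).differentiableWithinAt) (fun z hz => ?_) hx hy
  rw [fderivWithin_of_isOpen isOpen_Ioi hz, (h z hz).hasFDerivAt.fderiv]
  ext
  simp

theorem beta1_radial_ode_general_solution (M : ℝ) (hM : 0 < M)
    (u : ℝ → ℝ)
    (hu1 : ∀ r ∈ Set.Ioi (2 * M), DifferentiableAt ℝ u r)
    (hu2 : ∀ r ∈ Set.Ioi (2 * M), DifferentiableAt ℝ (deriv u) r)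
    (hode : ∀ r ∈ Set.Ioi (2 * M),
      (r ^ 2 - 2 * M * r) * deriv (deriv u) r + (2 * r - 2 * M) * deriv u r
        = 2 * (1 - 4 * M / r) * u r) :
    ∃ C₁ C₂ : ℝ, ∀ r ∈ Set.Ioi (2 * M),
      u r = C₁ / r ^ 2
        + C₂ * (12 * M ^ 2 * r + 3 * M * r ^ 2 + r ^ 3
            + 24 * M ^ 3 * Real.log (r - 2 * M)) / (3 * r ^ 2) := by
  have hr0 : ∀ r ∈ Set.Ioi (2*M), (0:ℝ) < r := fun r hr => lt_trans (by linarith) hr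
  have hrm : ∀ r ∈ Set.Ioi (2*M), r - 2*M ≠ 0 := fun r hr => by
    have := Set.mem_Ioi.mp hr; intro h; linarith
  have h1mem : (2*M + 1) ∈ Set.Ioi (2*M) := by simp
  -- Step 1: the "Wronskian" G is constant
  have hG : ∃ c : ℝ, ∀ r ∈ Set.Ioi (2*M),
      (r - 2*M)/r * deriv u r + 2*(r - 2*M)/r^2 * u r = c := by
    have hGd : ∀ r ∈ Set.Ioi (2*M), HasDerivAt
        (fun r => (r - 2*M)/r * deriv u r + 2*(r - 2*M)/r^2 * u r) 0 r := by
      intro r hr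
      have hrpos := hr0 r hr
      have hrm' := hrm r hr
      have hne : r^2 - 2*M*r ≠ 0 := by
        have h : r^2 - 2*M*r = r * (r - 2*M) := by ring
        rw [h]; exact mul_ne_zero hrpos.ne' hrm'
      have h1 : HasDerivAt (fun r : ℝ => (r - 2*M)/r)
          ((1 * r - (r - 2*M) * 1) / r ^ 2) r :=
        ((hasDerivAt_id r).sub_const (2*M)).div (hasDerivAt_id r) hrpos.ne'
      have h2 := h1.mul ((hu2 r hr).hasDerivAt)
      have h3 : HasDerivAt (fun r : ℝ => 2*(r - 2*M)/r^2)
          ((2 * 1 * r ^ 2 - 2*(r - 2*M) * (↑2 * r ^ 1)) / (r ^ 2) ^ 2) r :=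
        (((hasDerivAt_id r).sub_const (2*M)).const_mul 2).div (hasDerivAt_pow 2 r)
          (pow_ne_zero 2 hrpos.ne')
      have h4 := h3.mul ((hu1 r hr).hasDerivAt)
      have hD := h2.add h4
      have key : deriv (deriv u) r
          = (2 * (1 - 4 * M / r) * u r - (2 * r - 2 * M) * deriv u r) / (r^2 - 2*M*r) := by
        rw [eq_div_iff hne]
        linear_combination hode r hr
      have hzero : (1 * r - (r - 2*M) * 1) / r ^ 2 * deriv u r
          + (r - 2*M)/r * deriv (deriv u) r
          + ((2 * 1 * r ^ 2 - 2*(r - 2*M) * (↑2 * r ^ 1)) / (r ^ 2) ^ 2 * u r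
            + 2*(r - 2*M)/r^2 * deriv u r) = 0 := by
        rw [key]
        field_simp
        ring
      exact hzero ▸ hD
    exact ⟨_, fun r hr => const_of_hasDerivAt_zero_Ioi hGd r hr _ h1mem⟩
  obtain ⟨c, hGc⟩ := hG
  -- Step 2: H is constant
  have hH : ∃ C₁ : ℝ, ∀ r ∈ Set.Ioi (2*M),
      r^2 * u r - c*(r^3/3 + M*r^2 + 4*M^2*r + 8*M^3*Real.log (r - 2*M)) = C₁ := by
    have hHd : ∀ r ∈ Set.Ioi (2*M), HasDerivAt
        (fun r => r^2 * u r - c*(r^3/3 + M*r^2 + 4*M^2*r + 8*M^3*Real.log (r - 2*M))) 0 r := by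
      intro r hr
      have hrpos := hr0 r hr
      have hrm' := hrm r hr
      have h1 := (hasDerivAt_pow 2 r).mul ((hu1 r hr).hasDerivAt)
      have hlog : HasDerivAt (fun r : ℝ => Real.log (r - 2*M)) ((r - 2*M)⁻¹ * 1) r :=
        by have h := (Real.hasDerivAt_log hrm').comp r ((hasDerivAt_id r).sub_const (2*M)); exact h
      have h2 : HasDerivAt (fun r : ℝ => r^3/3 + M*r^2 + 4*M^2*r
          + 8*M^3*Real.log (r - 2*M))
          ((↑3 * r ^ 2)/3 + M*(↑2 * r ^ 1) + 4*M^2*1 + 8*M^3*((r - 2*M)⁻¹ * 1)) r :=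
        (((((hasDerivAt_pow 3 r).div_const 3).add
          ((hasDerivAt_pow 2 r).const_mul M)).add
          ((hasDerivAt_id r).const_mul (4*M^2))).add (hlog.const_mul (8*M^3)))
      have hD := h1.sub (h2.const_mul c)
      have hGr := hGc r hr
      have hzero : (↑2 * r ^ 1 * u r + r ^ 2 * deriv u r)
          - c * ((↑3 * r ^ 2)/3 + M*(↑2 * r ^ 1) + 4*M^2*1 + 8*M^3*((r - 2*M)⁻¹ * 1)) = 0 := by
        rw [← hGr]
        field_simp
        ring
      have hD' : HasDerivAt
          (fun r => r^2 * u r - c*(r^3/3 + M*r^2 + 4*M^2*r + 8*M^3*Real.log (r - 2*M)))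
          ((↑2 * r ^ 1 * u r + r ^ 2 * deriv u r)
            - c * ((↑3 * r ^ 2)/3 + M*(↑2 * r ^ 1) + 4*M^2*1 + 8*M^3*((r - 2*M)⁻¹ * 1))) r := hD
      exact hzero ▸ hD'
    exact ⟨_, fun r hr => const_of_hasDerivAt_zero_Ioi hHd r hr _ h1mem⟩
  obtain ⟨C₁, hHc⟩ := hH
  refine ⟨C₁, c, fun r hr => ?_⟩
  have hrpos := hr0 r hr
  have hHr := hHc r hr
  rw [div_add_div _ _ (by positivity) (by positivity), eq_div_iff (by positivity)]
  linear_combination 3 * r ^ 2 * hHr
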